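/- arXiv:1511.07074 — 8 statements merged into one kernel-verified Lean document; each statement's English description precedes it below -/
import Mathlib

section
/- In the calculus with MP, IPC1, IPC2, and the Peirce scheme IPC0 (((A ⊃ B) ⊃ A) ⊃ A), every instance of the scheme IPC0': (A ⊃ Q) ⊃ (((A ⊃ B) ⊃ Q) ⊃ Q) is a theorem. -/
inductive Fm : Type
  | var : Nat → Fm
  | imp : Fm → Fm → Fm

inductive ThmP : Fm → Prop
  | ipc1 (A B : Fm) : ThmP (A.imp (B.imp A))
  | ipc2 (A B C : Fm) : ThmP ((A.imp (B.imp C)).imp ((A.imp B).imp (A.imp C)))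
  | ipc0 (A B : Fm) : ThmP (((A.imp B).imp A).imp A)
  | mp {A B : Fm} : ThmP (A.imp B) → ThmP A → ThmP B

inductive Der (Γ : Fm → Prop) : Fm → Prop
  | hyp {A : Fm} : Γ A → Der Γ A
  | ipc1 (A B : Fm) : Der Γ (A.imp (B.imp A))
  | ipc2 (A B C : Fm) : Der Γ ((A.imp (B.imp C)).imp ((A.imp B).imp (A.imp C)))
  | ipc0 (A B : Fm) : Der Γ (((A.imp B).imp A).imp A)
  | mp {A B : Fm} : Der Γ (A.imp B) → Der Γ A → Der Γ B

lemma Der.idem (Γ : Fm → Prop) (A : Fm) : Der Γ (A.imp A) :=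
  .mp (.mp (.ipc2 A (A.imp A) A) (.ipc1 A (A.imp A))) (.ipc1 A A)

lemma ded {Γ : Fm → Prop} {A B : Fm}
    (h : Der (fun X => X = A ∨ Γ X) B) : Der Γ (A.imp B) := by
  induction h with
  | hyp h =>
    rcases h with h | h
    · cases h; exact Der.idem _ _
    · exact .mp (.ipc1 _ _) (.hyp h)
  | ipc1 X Y => exact .mp (.ipc1 _ _) (.ipc1 X Y)
  | ipc2 X Y Z => exact .mp (.ipc1 _ _) (.ipc2 X Y Z)
  | ipc0 X Y => exact .mp (.ipc1 _ _) (.ipc0 X Y)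
  | mp _ _ ih1 ih2 => exact .mp (.mp (.ipc2 _ _ _) ih1) ih2

lemma toThm {A : Fm} (h : Der (fun _ => False) A) : ThmP A := by
  induction h with
  | hyp h => exact h.elim
  | ipc1 X Y => exact .ipc1 X Y
  | ipc2 X Y Z => exact .ipc2 X Y Z
  | ipc0 X Y => exact .ipc0 X Y
  | mp _ _ ih1 ih2 => exact .mp ih1 ih2

theorem stmt_3 (A B Q : Fm) :
    ThmP ((A.imp Q).imp (((A.imp B).imp Q).imp Q)) := by
  apply toThm
  apply ded
  apply ded
  -- context: (A.imp B).imp Q, A.imp Q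
  apply Der.mp (Der.ipc0 Q B)
  apply ded
  -- added: Q.imp B; goal Q
  refine Der.mp (Der.hyp (Or.inr (Or.inl rfl))) ?_  -- g : (A.imp B).imp Q
  apply ded
  -- added A, goal B
  exact Der.mp (Der.hyp (Or.inr (Or.inl rfl)))
    (Der.mp (Der.hyp (Or.inr (Or.inr (Or.inr (Or.inl rfl))))) (Der.hyp (Or.inl rfl)))
end

section
/- In the calculus with MP, IPC1, IPC2, and all instances of IPC0' ((A ⊃ Q) ⊃ (((A ⊃ B) ⊃ Q) ⊃ Q)) as axioms, every instance of the Peirce scheme IPC0 (((A ⊃ B) ⊃ A) ⊃ A) is a theorem. -/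
inductive ThmQ : Fm → Prop
  | ipc1 (A B : Fm) : ThmQ (A.imp (B.imp A))
  | ipc2 (A B C : Fm) : ThmQ ((A.imp (B.imp C)).imp ((A.imp B).imp (A.imp C)))
  | ipc0' (A B Q : Fm) : ThmQ ((A.imp Q).imp (((A.imp B).imp Q).imp Q))
  | mp {A B : Fm} : ThmQ (A.imp B) → ThmQ A → ThmQ B

theorem stmt_4 (A B : Fm) : ThmQ (((A.imp B).imp A).imp A) := by
  have idA : ThmQ (A.imp A) :=
    ThmQ.mp (ThmQ.mp (ThmQ.ipc2 A (A.imp A) A) (ThmQ.ipc1 A (A.imp A))) (ThmQ.ipc1 A A)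
  exact ThmQ.mp (ThmQ.ipc0' A B A) idA
end

section
/- The Peirce axiom scheme IPC0 is equivalent to the scheme IPC0': in the presence of MP, IPC1, and IPC2, all instances of ((A ⊃ B) ⊃ A) ⊃ A are theorems if and only if all instances of (A ⊃ Q) ⊃ (((A ⊃ B) ⊃ Q) ⊃ Q) are theorems. -/
namespace Aux

/-- meta-level composition in ThmP -/
lemma pcomp {X Y Z : Fm} (h1 : ThmP (X.imp Y)) (h2 : ThmP (Y.imp Z)) :
    ThmP (X.imp Z) :=
  ThmP.mp (ThmP.mp (ThmP.ipc2 X Y Z) (ThmP.mp (ThmP.ipc1 (Y.imp Z) X) h2)) h1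

/-- object-level B combinator in ThmP -/
lemma pB (X Y Z : Fm) :
    ThmP ((Y.imp Z).imp ((X.imp Y).imp (X.imp Z))) :=
  ThmP.mp
    (ThmP.mp (ThmP.ipc2 (Y.imp Z) (X.imp (Y.imp Z)) ((X.imp Y).imp (X.imp Z)))
      (ThmP.mp (ThmP.ipc1 ((X.imp (Y.imp Z)).imp ((X.imp Y).imp (X.imp Z))) (Y.imp Z))
        (ThmP.ipc2 X Y Z)))
    (ThmP.ipc1 (Y.imp Z) X)

/-- meta-level flip in ThmP -/
lemma pflip {X Y Z : Fm} (h : ThmP (X.imp (Y.imp Z))) :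
    ThmP (Y.imp (X.imp Z)) :=
  pcomp (ThmP.ipc1 Y X) (ThmP.mp (ThmP.ipc2 X Y Z) h)

lemma qid (A : Fm) : ThmQ (A.imp A) :=
  ThmQ.mp (ThmQ.mp (ThmQ.ipc2 A (A.imp A) A) (ThmQ.ipc1 A (A.imp A))) (ThmQ.ipc1 A A)

end Aux

theorem stmt_5 :
    (∀ A B Q : Fm, ThmP ((A.imp Q).imp (((A.imp B).imp Q).imp Q))) ∧
    (∀ A B : Fm, ThmQ (((A.imp B).imp A).imp A)) := by
  constructor
  · intro A B Q
    -- f1 : (A⊃Q) ⊃ ((Q⊃B)⊃(A⊃B))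
    have f1 : ThmP ((A.imp Q).imp ((Q.imp B).imp (A.imp B))) :=
      Aux.pflip (Aux.pB A Q B)
    -- f2 : ((Q⊃B)⊃(A⊃B)) ⊃ (((A⊃B)⊃Q) ⊃ ((Q⊃B)⊃Q))
    have f2 : ThmP (((Q.imp B).imp (A.imp B)).imp
        (((A.imp B).imp Q).imp ((Q.imp B).imp Q))) :=
      Aux.pflip (Aux.pB (Q.imp B) (A.imp B) Q)
    -- f3 : (((A⊃B)⊃Q)⊃((Q⊃B)⊃Q)) ⊃ (((A⊃B)⊃Q)⊃Q)
    have f3 : ThmP ((((A.imp B).imp Q).imp ((Q.imp B).imp Q)).imp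
        (((A.imp B).imp Q).imp Q)) :=
      ThmP.mp (Aux.pB ((A.imp B).imp Q) ((Q.imp B).imp Q) Q) (ThmP.ipc0 Q B)
    exact Aux.pcomp f1 (Aux.pcomp f2 f3)
  · intro A B
    exact ThmQ.mp (ThmQ.ipc0' A B A) (Aux.qid A)
end

section
/- ∨-Elimination: In the calculus with MP, IPC1, IPC2, and the Peirce scheme IPC0, if A ⊃ Q and B ⊃ Q are theorems, then ((A ⊃ B) ⊃ B) ⊃ Q is a theorem. -/
/-- Derivability from one hypothesis. -/
inductive Der_s8 (H : Fm) : Fm → Prop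
  | hyp : Der_s8 H H
  | thm {A : Fm} : ThmP A → Der_s8 H A
  | mp {A B : Fm} : Der_s8 H (A.imp B) → Der_s8 H A → Der_s8 H B

theorem thm_id (A : Fm) : ThmP (A.imp A) :=
  ThmP.mp (ThmP.mp (ThmP.ipc2 A (A.imp A) A) (ThmP.ipc1 A (A.imp A))) (ThmP.ipc1 A A)

theorem ded_s8 {H C : Fm} (h : Der_s8 H C) : ThmP (H.imp C) := by
  induction h with
  | hyp => exact thm_id H
  | thm t => exact ThmP.mp (ThmP.ipc1 _ H) t
  | mp _ _ ih1 ih2 => exact ThmP.mp (ThmP.mp (ThmP.ipc2 _ _ _) ih1) ih2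

theorem Der_s8.comp {H A B C : Fm} (f : Der_s8 H (B.imp C)) (g : Der_s8 H (A.imp B)) :
    Der_s8 H (A.imp C) :=
  Der_s8.mp (Der_s8.mp (Der_s8.thm (ThmP.ipc2 A B C)) (Der_s8.mp (Der_s8.thm (ThmP.ipc1 _ A)) f)) g

theorem stmt_8 (A B Q : Fm) (hA : ThmP (A.imp Q)) (hB : ThmP (B.imp Q)) :
    ThmP (((A.imp B).imp B).imp Q) := by
  -- (Q⊃B)⊃(A⊃B) is a theorem, from A⊃Q
  have t2 : ThmP ((Q.imp B).imp (A.imp B)) :=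
    ded_s8 (Der_s8.comp Der_s8.hyp (Der_s8.thm hA))
  -- work under hypothesis H = (A⊃B)⊃B
  have h1 : Der_s8 ((A.imp B).imp B) ((A.imp B).imp Q) := Der_s8.comp (Der_s8.thm hB) Der_s8.hyp
  have h3 : Der_s8 ((A.imp B).imp B) ((Q.imp B).imp Q) := Der_s8.comp h1 (Der_s8.thm t2)
  exact ded_s8 (Der_s8.mp (Der_s8.thm (ThmP.ipc0 Q B)) h3)
end

section
/- Suppose the calculus with MP, IPC1, IPC2 additionally validates the inference rule ∨E: whenever A ⊃ Q and B ⊃ Q are theorems, so is ((A ⊃ B) ⊃ B) ⊃ Q. Then every instance of the Peirce scheme ((A ⊃ B) ⊃ A) ⊃ A is a theorem. -/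
inductive ThmV : Fm → Prop
  | ipc1 (A B : Fm) : ThmV (A.imp (B.imp A))
  | ipc2 (A B C : Fm) : ThmV ((A.imp (B.imp C)).imp ((A.imp B).imp (A.imp C)))
  | mp {A B : Fm} : ThmV (A.imp B) → ThmV A → ThmV B
  | veeE {A B Q : Fm} : ThmV (A.imp Q) → ThmV (B.imp Q) → ThmV (((A.imp B).imp B).imp Q)

lemma thmI (A : Fm) : ThmV (A.imp A) :=
  ThmV.mp (ThmV.mp (ThmV.ipc2 A (A.imp A) A) (ThmV.ipc1 A (A.imp A))) (ThmV.ipc1 A A)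

lemma thmComp {A B C : Fm} (h1 : ThmV (B.imp C)) (h2 : ThmV (A.imp B)) :
    ThmV (A.imp C) :=
  ThmV.mp (ThmV.mp (ThmV.ipc2 A B C) (ThmV.mp (ThmV.ipc1 (B.imp C) A) h1)) h2

/-- assertion: X ⊃ ((X ⊃ C) ⊃ C) -/
lemma thmT (X C : Fm) : ThmV (X.imp ((X.imp C).imp C)) :=
  thmComp (ThmV.mp (ThmV.ipc2 (X.imp C) X C) (thmI (X.imp C)))
    (ThmV.ipc1 X (X.imp C))

theorem stmt_12 (A B : Fm) : ThmV (((A.imp B).imp A).imp A) := by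
  set P : Fm := ((A.imp B).imp A).imp A with hP
  have t2 : ThmV (A.imp P) := ThmV.ipc1 A ((A.imp B).imp A)
  have t1 : ThmV (B.imp P) :=
    thmComp (thmT (A.imp B) A) (ThmV.ipc1 B A)
  have R : ThmV (((A.imp B).imp B).imp P) := ThmV.veeE t2 t1
  have G : ThmV (((A.imp B).imp A).imp ((A.imp B).imp B)) :=
    ThmV.mp (ThmV.ipc2 (A.imp B) A B) (thmI (A.imp B))
  have X : ThmV (((A.imp B).imp A).imp P) := thmComp R G
  exact ThmV.mp (ThmV.mp (ThmV.ipc2 ((A.imp B).imp A) ((A.imp B).imp A) A) X)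
    (thmI ((A.imp B).imp A))
end

section
/- The Peirce axiom scheme is equivalent to the rule ∨E: for the implicational calculus with MP, IPC1, IPC2, (all instances of ((A ⊃ B) ⊃ A) ⊃ A are theorems) if and only if (the theorems are closed under the rule: from ⊢ A ⊃ Q and ⊢ B ⊃ Q infer ⊢ ((A ⊃ B) ⊃ B) ⊃ Q). -/
/-- Derivations from a context Γ, with extra axioms Ax. -/
inductive Der_s13 (Ax : Fm → Prop) : List Fm → Fm → Prop
  | ax {Γ A} : Ax A → Der_s13 Ax Γ A
  | hyp {Γ A} : A ∈ Γ → Der_s13 Ax Γ A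
  | ipc1 {Γ} (A B : Fm) : Der_s13 Ax Γ (A.imp (B.imp A))
  | ipc2 {Γ} (A B C : Fm) : Der_s13 Ax Γ ((A.imp (B.imp C)).imp ((A.imp B).imp (A.imp C)))
  | mp {Γ A B} : Der_s13 Ax Γ (A.imp B) → Der_s13 Ax Γ A → Der_s13 Ax Γ B

theorem Der_s13.id {Ax Γ} (A : Fm) : Der_s13 Ax Γ (A.imp A) :=
  Der_s13.mp (Der_s13.mp (Der_s13.ipc2 A (A.imp A) A) (Der_s13.ipc1 A (A.imp A))) (Der_s13.ipc1 A A)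

theorem Der_s13.ded {Ax Γ A B} (h : Der_s13 Ax (A :: Γ) B) : Der_s13 Ax Γ (A.imp B) := by
  induction h with
  | ax h => exact Der_s13.mp (Der_s13.ipc1 _ _) (Der_s13.ax h)
  | hyp h =>
    rcases List.mem_cons.mp h with h | h
    · subst h; exact Der_s13.id _
    · exact Der_s13.mp (Der_s13.ipc1 _ _) (Der_s13.hyp h)
  | ipc1 X Y => exact Der_s13.mp (Der_s13.ipc1 _ _) (Der_s13.ipc1 X Y)
  | ipc2 X Y Z => exact Der_s13.mp (Der_s13.ipc1 _ _) (Der_s13.ipc2 X Y Z)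
  | mp _ _ ih1 ih2 => exact Der_s13.mp (Der_s13.mp (Der_s13.ipc2 _ _ _) ih1) ih2

theorem Der_s13.toThmP {A} (h : Der_s13 ThmP [] A) : ThmP A := by
  induction h with
  | ax h => exact h
  | hyp h => simp at h
  | ipc1 X Y => exact ThmP.ipc1 X Y
  | ipc2 X Y Z => exact ThmP.ipc2 X Y Z
  | mp _ _ ih1 ih2 => exact ThmP.mp ih1 ih2

theorem Der_s13.toThmV {A} (h : Der_s13 ThmV [] A) : ThmV A := by
  induction h with
  | ax h => exact h
  | hyp h => simp at h
  | ipc1 X Y => exact ThmV.ipc1 X Y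
  | ipc2 X Y Z => exact ThmV.ipc2 X Y Z
  | mp _ _ ih1 ih2 => exact ThmV.mp ih1 ih2

theorem stmt_13 :
    (∀ A B Q : Fm, ThmP (A.imp Q) → ThmP (B.imp Q) → ThmP (((A.imp B).imp B).imp Q)) ∧
    (∀ A B : Fm, ThmV (((A.imp B).imp A).imp A)) := by
  constructor
  · intro A B Q hA hB
    apply Der_s13.toThmP
    apply Der_s13.ded
    -- context [D] where D = (A⊃B)⊃B ; derive Q
    have hQB : Der_s13 ThmP [Q.imp B, (A.imp B).imp B] Q := by
      have hAB : Der_s13 ThmP [Q.imp B, (A.imp B).imp B] (A.imp B) := by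
        apply Der_s13.ded
        exact Der_s13.mp (Der_s13.hyp (by simp)) (Der_s13.mp (Der_s13.ax hA) (Der_s13.hyp (by simp)))
      exact Der_s13.mp (Der_s13.ax hB) (Der_s13.mp (Der_s13.hyp (by simp)) hAB)
    exact Der_s13.mp (Der_s13.ax (ThmP.ipc0 Q B)) (Der_s13.ded hQB)
  · intro A B
    set P : Fm := (A.imp B).imp A with hP
    -- L2 : B ⊃ (P ⊃ A)
    have L2 : ThmV (B.imp (P.imp A)) := by
      apply Der_s13.toThmV
      apply Der_s13.ded; apply Der_s13.ded
      exact Der_s13.mp (Der_s13.hyp (by simp [hP]))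
        (Der_s13.mp (Der_s13.ipc1 B A) (Der_s13.hyp (by simp)))
    have L1 : ThmV (A.imp (P.imp A)) := ThmV.ipc1 A P
    have D : ThmV (((A.imp B).imp B).imp (P.imp A)) := ThmV.veeE L1 L2
    have C : ThmV (P.imp ((A.imp B).imp B)) := by
      apply Der_s13.toThmV
      apply Der_s13.ded; apply Der_s13.ded
      have hAB : Der_s13 ThmV [A.imp B, P] (A.imp B) := Der_s13.hyp (by simp)
      have hPh : Der_s13 ThmV [A.imp B, P] P := Der_s13.hyp (by simp)
      exact Der_s13.mp hAB (Der_s13.mp hPh hAB)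
    apply Der_s13.toThmV
    apply Der_s13.ded
    exact Der_s13.mp (Der_s13.mp (Der_s13.ax D) (Der_s13.mp (Der_s13.ax C) (Der_s13.hyp (by simp)))) (Der_s13.hyp (by simp))
end

section
/- In the calculus with MP, IPC1, IPC2, and the Peirce scheme IPC0, the class [(A ⊃ B) ⊃ B] is the least upper bound of [A] and [B] in the Lindenbaum poset: ⊢ A ⊃ ((A ⊃ B) ⊃ B), ⊢ B ⊃ ((A ⊃ B) ⊃ B), and for every Q, if ⊢ A ⊃ Q and ⊢ B ⊃ Q then ⊢ ((A ⊃ B) ⊃ B) ⊃ Q. -/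
namespace Aux

theorem idid (A : Fm) : ThmP (A.imp A) :=
  ThmP.mp (ThmP.mp (ThmP.ipc2 A (A.imp A) A) (ThmP.ipc1 A (A.imp A))) (ThmP.ipc1 A A)

inductive Dv : List Fm → Fm → Prop
  | hyp {Γ A} : A ∈ Γ → Dv Γ A
  | ax {Γ A} : ThmP A → Dv Γ A
  | mp {Γ A B} : Dv Γ (A.imp B) → Dv Γ A → Dv Γ B

theorem ded {Γ : List Fm} {A B : Fm} (h : Dv (A :: Γ) B) : Dv Γ (A.imp B) := by
  induction h with
  | hyp hm =>
    rcases List.mem_cons.mp hm with h | h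
    · subst h; exact Dv.ax (idid _)
    · exact Dv.mp (Dv.ax (ThmP.ipc1 _ _)) (Dv.hyp h)
  | ax h => exact Dv.mp (Dv.ax (ThmP.ipc1 _ _)) (Dv.ax h)
  | mp _ _ ih1 ih2 => exact Dv.mp (Dv.mp (Dv.ax (ThmP.ipc2 _ _ _)) ih1) ih2

theorem ofDv {A : Fm} (h : Dv [] A) : ThmP A := by
  generalize hΓ : ([] : List Fm) = Γ at h
  induction h with
  | hyp hm => subst hΓ; simp at hm
  | ax h => exact h
  | mp _ _ ih1 ih2 => exact ThmP.mp ih1 ih2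

end Aux

theorem stmt_17 (A B : Fm) :
    ThmP (A.imp ((A.imp B).imp B)) ∧
    ThmP (B.imp ((A.imp B).imp B)) ∧
    (∀ Q : Fm, ThmP (A.imp Q) → ThmP (B.imp Q) → ThmP (((A.imp B).imp B).imp Q)) := by
  refine ⟨?_, ThmP.ipc1 B (A.imp B), ?_⟩
  · refine Aux.ofDv (Aux.ded (Aux.ded (Aux.Dv.mp (B := B)
      (Aux.Dv.hyp (A := A.imp B) (by simp)) (Aux.Dv.hyp (A := A) (by simp)))))
  · intro Q h1 h2
    have key : ThmP (((A.imp B).imp B).imp ((Q.imp B).imp Q)) := by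
      apply Aux.ofDv
      apply Aux.ded
      apply Aux.ded
      -- context: [Q⊃B, (A⊃B)⊃B] ⊢ Q
      have hq : Aux.Dv [Q.imp B, (A.imp B).imp B] (Q.imp B) := Aux.Dv.hyp (by simp)
      have hh : Aux.Dv [Q.imp B, (A.imp B).imp B] ((A.imp B).imp B) := Aux.Dv.hyp (by simp)
      have hab : Aux.Dv [Q.imp B, (A.imp B).imp B] (A.imp B) := by
        apply Aux.ded
        exact Aux.Dv.mp (Aux.Dv.hyp (by simp))
          (Aux.Dv.mp (Aux.Dv.ax h1) (Aux.Dv.hyp (by simp)))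
      exact Aux.Dv.mp (Aux.Dv.ax h2) (Aux.Dv.mp hh hab)
    exact ThmP.mp (ThmP.mp (ThmP.ipc2 _ _ _)
      (ThmP.mp (ThmP.ipc1 _ _) (ThmP.ipc0 Q B))) key
end

section
/- The Peirce axiom scheme is equivalent to binary suprema in the Lindenbaum poset: for the calculus with MP, IPC1, IPC2, all Peirce instances ((A ⊃ B) ⊃ A) ⊃ A are theorems if and only if for all formulas A, B the class of (A ⊃ B) ⊃ B is a supremum of [A] and [B] (i.e., ⊢ A ⊃ ((A ⊃ B) ⊃ B), ⊢ B ⊃ ((A ⊃ B) ⊃ B), and whenever ⊢ A ⊃ Q and ⊢ B ⊃ Q, also ⊢ ((A ⊃ B) ⊃ B) ⊃ Q). -/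
theorem stmt_18 (T : Fm → Prop)
    (h1 : ∀ A B : Fm, T (A.imp (B.imp A)))
    (h2 : ∀ A B C : Fm, T ((A.imp (B.imp C)).imp ((A.imp B).imp (A.imp C))))
    (hmp : ∀ A B : Fm, T (A.imp B) → T A → T B) :
    (∀ A B : Fm, T (((A.imp B).imp A).imp A)) ↔
    (∀ A B : Fm, T (A.imp ((A.imp B).imp B)) ∧ T (B.imp ((A.imp B).imp B)) ∧
      ∀ Q : Fm, T (A.imp Q) → T (B.imp Q) → T (((A.imp B).imp B).imp Q)) := by
  -- identity
  have I : ∀ A : Fm, T (A.imp A) := fun A =>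
    hmp _ _ (hmp _ _ (h2 A (A.imp A) A) (h1 A (A.imp A))) (h1 A A)
  -- composition: T (B⊃C) → T (A⊃B) → T (A⊃C)
  have comp : ∀ A B C : Fm, T (B.imp C) → T (A.imp B) → T (A.imp C) :=
    fun A B C hbc hab =>
      hmp _ _ (hmp _ _ (h2 A B C) (hmp _ _ (h1 (B.imp C) A) hbc)) hab
  -- flip: T (A⊃(B⊃C)) → T (B⊃(A⊃C))
  have flipT : ∀ A B C : Fm, T (A.imp (B.imp C)) → T (B.imp (A.imp C)) :=
    fun A B C h =>
      comp B (A.imp B) (A.imp C) (hmp _ _ (h2 A B C) h) (h1 B A)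
  -- assertion: T (A⊃((A⊃B)⊃B))
  have assert : ∀ A B : Fm, T (A.imp ((A.imp B).imp B)) :=
    fun A B => flipT (A.imp B) A B (I (A.imp B))
  -- precomposition: T (A⊃Q) → T ((Q⊃B)⊃(A⊃B))
  have lcomp : ∀ A Q B : Fm, T (A.imp Q) → T ((Q.imp B).imp (A.imp B)) :=
    fun A Q B hAQ =>
      comp (Q.imp B) (A.imp (Q.imp B)) (A.imp B)
        (hmp _ _ (flipT (A.imp (Q.imp B)) (A.imp Q) (A.imp B) (h2 A Q B)) hAQ)
        (h1 (Q.imp B) A)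
  -- postcomposition: T (B⊃Q) → T ((X⊃B)⊃(X⊃Q))
  have rcomp : ∀ X B Q : Fm, T (B.imp Q) → T ((X.imp B).imp (X.imp Q)) :=
    fun X B Q hBQ => hmp _ _ (h2 X B Q) (hmp _ _ (h1 (B.imp Q) X) hBQ)
  constructor
  · intro hpe A B
    refine ⟨assert A B, h1 B (A.imp B), ?_⟩
    intro Q hA hB
    -- t0 : ((A⊃B)⊃B) ⊃ ((Q⊃B)⊃B)
    have c1 : T ((Q.imp B).imp (A.imp B)) := lcomp A Q B hA
    have t0 : T (((A.imp B).imp B).imp ((Q.imp B).imp B)) :=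
      lcomp (Q.imp B) (A.imp B) B c1
    have t1 : T (((A.imp B).imp B).imp ((Q.imp B).imp Q)) :=
      comp _ _ _ (rcomp (Q.imp B) B Q hB) t0
    exact comp _ _ _ (hpe Q B) t1
  · intro hs A B
    set Q : Fm := ((A.imp B).imp A).imp A with hQ
    have hAQ : T (A.imp Q) := h1 A ((A.imp B).imp A)
    have hXQ : T ((A.imp B).imp Q) := (hs (A.imp B) A).1
    have third := (hs A (A.imp B)).2.2 Q hAQ hXQ
    -- W : (A⊃(A⊃B)) ⊃ (A⊃B)
    have W : T ((A.imp (A.imp B)).imp (A.imp B)) :=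
      hmp _ _ (flipT (A.imp (A.imp B)) (A.imp A) (A.imp B) (h2 A A B)) (I A)
    exact hmp _ _ third W
end
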